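/- Let A be a unital complex Banach algebra and let R ∈ A with ‖R‖ < 1. Define coefficients c₀ := 1 and cₙ := ∏_{k=0}^{n−1} (2k+1)/(2k+2) for n ≥ 1. Then the series Σ_{n≥0} cₙ Rⁿ converges absolutely in A, and its sum S satisfies S·S·(1−R) = (1−R)·S·S = 1; moreover S commutes with every element a ∈ A that commutes with R. -/

import Mathlib

lemma crec (c : ℕ → ℝ)
    (hc : ∀ n, c n = ∏ k ∈ Finset.range n, ((2 * (k : ℝ) + 1) / (2 * (k : ℝ) + 2))) :
    ∀ k : ℕ, (2 * (k : ℝ) + 2) * c (k + 1) = (2 * (k : ℝ) + 1) * c k := by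
  intro k
  rw [hc (k + 1), hc k, Finset.prod_range_succ]
  have h2 : (2 * (k : ℝ) + 2) ≠ 0 := by positivity
  field_simp

lemma conv_eq_one (c : ℕ → ℝ)
    (hc : ∀ n, c n = ∏ k ∈ Finset.range n, ((2 * (k : ℝ) + 1) / (2 * (k : ℝ) + 2))) :
    ∀ n : ℕ, ∑ i ∈ Finset.range (n + 1), c i * c (n - i) = 1 := by
  have hrec := crec c hc
  have hc0 : c 0 = 1 := by rw [hc]; simp
  intro n
  induction n with
  | zero => simp [hc0]
  | succ n ih =>
    have claim1 : ∑ i ∈ Finset.range (n + 2), 2 * (i : ℝ) * (c i * c (n + 1 - i))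
        = ∑ j ∈ Finset.range (n + 1), (2 * (j : ℝ) + 1) * (c j * c (n - j)) := by
      rw [Finset.sum_range_succ' (fun i => 2 * (i : ℝ) * (c i * c (n + 1 - i))) (n + 1)]
      simp only [Nat.cast_zero, mul_zero, zero_mul, add_zero, Nat.cast_add, Nat.cast_one]
      refine Finset.sum_congr rfl fun j hj => ?_
      have h1 : n + 1 - (j + 1) = n - j := by omega
      rw [h1]
      have hr := hrec j
      calc 2 * ((j : ℝ) + 1) * (c (j + 1) * c (n - j))
          = ((2 * (j : ℝ) + 2) * c (j + 1)) * c (n - j) := by ring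
        _ = ((2 * (j : ℝ) + 1) * c j) * c (n - j) := by rw [hr]
        _ = (2 * (j : ℝ) + 1) * (c j * c (n - j)) := by ring
    have hL : (2 * (n : ℝ) + 2) * ∑ i ∈ Finset.range (n + 2), c i * c (n + 1 - i)
        = 2 * ∑ j ∈ Finset.range (n + 1), (2 * (j : ℝ) + 1) * (c j * c (n - j)) := by
      have expand : (2 * (n : ℝ) + 2) * ∑ i ∈ Finset.range (n + 2), c i * c (n + 1 - i)
          = (∑ i ∈ Finset.range (n + 2), 2 * (i : ℝ) * (c i * c (n + 1 - i)))
            + ∑ i ∈ Finset.range (n + 2), 2 * ((n + 1 - i : ℕ) : ℝ) * (c i * c (n + 1 - i)) := by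
        rw [Finset.mul_sum, ← Finset.sum_add_distrib]
        refine Finset.sum_congr rfl fun i hi => ?_
        rw [Finset.mem_range] at hi
        have hi' : i ≤ n + 1 := by omega
        rw [Nat.cast_sub hi']
        push_cast
        ring
      have refl2 : ∑ i ∈ Finset.range (n + 2), 2 * ((n + 1 - i : ℕ) : ℝ) * (c i * c (n + 1 - i))
          = ∑ i ∈ Finset.range (n + 2), 2 * (i : ℝ) * (c i * c (n + 1 - i)) := by
        conv_rhs => rw [← Finset.sum_range_reflect]
        refine Finset.sum_congr rfl fun i hi => ?_
        rw [Finset.mem_range] at hi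
        have h1 : n + 2 - 1 - i = n + 1 - i := by omega
        have h2 : n + 1 - (n + 1 - i) = i := by omega
        rw [h1, h2]
        ring
      rw [expand, refl2, claim1, two_mul]
    have hR : (2 * (n : ℝ) + 2) * ∑ j ∈ Finset.range (n + 1), c j * c (n - j)
        = 2 * ∑ j ∈ Finset.range (n + 1), (2 * (j : ℝ) + 1) * (c j * c (n - j)) := by
      have expand : (2 * (n : ℝ) + 2) * ∑ j ∈ Finset.range (n + 1), c j * c (n - j)
          = (∑ j ∈ Finset.range (n + 1), (2 * (j : ℝ) + 1) * (c j * c (n - j)))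
            + ∑ j ∈ Finset.range (n + 1), (2 * ((n - j : ℕ) : ℝ) + 1) * (c j * c (n - j)) := by
        rw [Finset.mul_sum, ← Finset.sum_add_distrib]
        refine Finset.sum_congr rfl fun j hj => ?_
        rw [Finset.mem_range] at hj
        have hj' : j ≤ n := by omega
        rw [Nat.cast_sub hj']
        ring
      have refl2 : ∑ j ∈ Finset.range (n + 1), (2 * ((n - j : ℕ) : ℝ) + 1) * (c j * c (n - j))
          = ∑ j ∈ Finset.range (n + 1), (2 * (j : ℝ) + 1) * (c j * c (n - j)) := by
        conv_rhs => rw [← Finset.sum_range_reflect]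
        refine Finset.sum_congr rfl fun j hj => ?_
        rw [Finset.mem_range] at hj
        have h1 : n + 1 - 1 - j = n - j := by omega
        have h2 : n - (n - j) = j := by omega
        rw [h1, h2]
        ring
      rw [expand, refl2, two_mul]
    rw [ih, mul_one] at hR
    have h2 : (2 * (n : ℝ) + 2) ≠ 0 := by positivity
    have heq : (2 * (n : ℝ) + 2) * ∑ i ∈ Finset.range (n + 2), c i * c (n + 1 - i)
        = (2 * (n : ℝ) + 2) * 1 := by rw [hL, ← hR, mul_one]
    exact mul_left_cancel₀ h2 heq



/-- **Binomial series for `(1−R)^{−1/2}` in a Banach algebra.**  Let `A` be a unital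
complex Banach algebra and `R ∈ A` with `‖R‖ < 1`.  With `cₙ := ∏_{k=0}^{n−1}
(2k+1)/(2k+2)` (so `c₀ = 1`), the series `Σ cₙ Rⁿ` converges absolutely, its sum `S`
satisfies `S·S·(1−R) = (1−R)·S·S = 1`, and `S` commutes with every `a` commuting
with `R`. -/
theorem binomial_series_inverse_sqrt
    {A : Type*} [NormedRing A] [NormedAlgebra ℂ A] [CompleteSpace A]
    (R : A) (hR : ‖R‖ < 1)
    (c : ℕ → ℝ)
    (hc : ∀ n, c n = ∏ k ∈ Finset.range n, ((2 * (k : ℝ) + 1) / (2 * (k : ℝ) + 2)))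
    (S : A) (hS : S = ∑' n : ℕ, (c n : ℂ) • R ^ n) :
    Summable (fun n : ℕ => ‖(c n : ℂ) • R ^ n‖) ∧
    S * S * (1 - R) = 1 ∧ (1 - R) * (S * S) = 1 ∧
    ∀ a : A, a * R = R * a → a * S = S * a := by
  have hnn : ∀ n, 0 ≤ c n := by
    intro n
    rw [hc]
    exact Finset.prod_nonneg fun k _ => by positivity
  have hle : ∀ n, c n ≤ 1 := by
    intro n
    rw [hc]
    refine Finset.prod_le_one (fun k _ => by positivity) (fun k _ => ?_)
    rw [div_le_one (by positivity)]
    linarith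
  have hsum : Summable (fun n : ℕ => ‖(c n : ℂ) • R ^ n‖) := by
    refine Summable.of_nonneg_of_le (fun n => norm_nonneg _) (fun n => ?_)
      (summable_norm_geometric_of_norm_lt_one hR)
    rw [norm_smul]
    calc ‖((c n : ℝ) : ℂ)‖ * ‖R ^ n‖ ≤ 1 * ‖R ^ n‖ := by
          apply mul_le_mul_of_nonneg_right _ (norm_nonneg _)
          rw [Complex.norm_real, Real.norm_eq_abs, abs_of_nonneg (hnn n)]
          exact hle n
      _ = ‖R ^ n‖ := one_mul _
  have hSS : S * S = ∑' n : ℕ, R ^ n := by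
    rw [hS, tsum_mul_tsum_eq_tsum_sum_antidiagonal_of_summable_norm hsum hsum]
    refine tsum_congr fun n => ?_
    have : ∀ kl ∈ Finset.HasAntidiagonal.antidiagonal n,
        ((c kl.1 : ℂ) • R ^ kl.1) * ((c kl.2 : ℂ) • R ^ kl.2)
          = ((c kl.1 * c kl.2 : ℝ) : ℂ) • R ^ n := by
      intro kl hkl
      rw [Finset.HasAntidiagonal.mem_antidiagonal] at hkl
      rw [smul_mul_smul_comm, ← pow_add, hkl]
      push_cast
      ring_nf
    rw [Finset.sum_congr rfl this, ← Finset.sum_smul]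
    have h1 : ∑ kl ∈ Finset.HasAntidiagonal.antidiagonal n, ((c kl.1 * c kl.2 : ℝ) : ℂ) = 1 := by
      rw [← Complex.ofReal_sum]
      norm_cast
      rw [Finset.Nat.sum_antidiagonal_eq_sum_range_succ_mk]
      exact conv_eq_one c hc n
    rw [h1, one_smul]
  refine ⟨hsum, ?_, ?_, ?_⟩
  · rw [hSS]
    exact geom_series_mul_neg R hR
  · rw [hSS]
    exact mul_neg_geom_series R hR
  · intro a ha
    have hsum' : Summable (fun n : ℕ => (c n : ℂ) • R ^ n) := hsum.of_norm
    rw [hS, ← hsum'.tsum_mul_left a, ← hsum'.tsum_mul_right a]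
    refine tsum_congr fun n => ?_
    have hcomm : a * R ^ n = R ^ n * a := ((Commute.symm ha).pow_left n).symm
    rw [mul_smul_comm, smul_mul_assoc, hcomm]
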